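/- Let r be a directed graph on a finite vertex type V, and let X̄, W̄, V2, D be vertex sets such that there exists a set of |D| + |W̄| pairwise vertex-disjoint paths from X̄ to W̄ ∪ D (i.e. b(X̄ → W̄ ∪ D) = |D| + |W̄|). Then D is an X̄–V2 disconnecting set if and only if D is a (W̄ ∪ X̄)–V2 disconnecting set and D ∩ W̄ = ∅. -/

import Mathlib

lemma getLast?_cons_ne {V : Type*} {a : V} {m : List V} (h : m ≠ []) :
    (a :: m).getLast? = m.getLast? := by
  cases m with
  | nil => simp at h
  | cons b t => simp

/-- A path in a directed graph `r`: a nonempty duplicate-free list of vertices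
in which every pair of consecutive entries is related by `r`. -/
def IsPath {V : Type*} (r : V → V → Prop) (l : List V) : Prop :=
  l ≠ [] ∧ l.Nodup ∧ l.Chain' r

/-- A path from the vertex set `V1` to the vertex set `V2`. -/
def IsPathFromTo {V : Type*} (r : V → V → Prop) (V1 V2 : Set V) (l : List V) : Prop :=
  IsPath r l ∧ ∀ h : l ≠ [], l.head h ∈ V1 ∧ l.getLast h ∈ V2

/-- `D` is a `V1`–`V2` disconnecting set: every path from `V1` to `V2`
contains a vertex of `D`. -/
def Disconnects {V : Type*} (r : V → V → Prop) (V1 V2 D : Set V) : Prop :=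
  ∀ l : List V, IsPathFromTo r V1 V2 l → ∃ v ∈ D, v ∈ l

section counting
variable {V : Type*} [Fintype V] {r : V → V → Prop} {Xb Wb D : Set V} {P : Finset (List V)}

lemma counting (hcard : P.card = D.ncard + Wb.ncard)
    (hP : ∀ l ∈ P, IsPathFromTo r Xb (Wb ∪ D) l)
    (hdisj : ∀ l₁ ∈ P, ∀ l₂ ∈ P, l₁ ≠ l₂ → ∀ v ∈ l₁, v ∉ l₂) :
    D ∩ Wb = ∅ ∧ ∀ v ∈ Wb ∪ D, ∃ p ∈ P, p.getLast? = some v := by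
  classical
  have hne : ∀ p ∈ P, p ≠ [] := fun p hp => (hP p hp).1.1
  have hinj : Set.InjOn (fun l : List V => l.getLast?) ↑P := by
    intro p hp q hq hpq
    by_contra hne'
    have hp' := hne p hp
    have hq' := hne q hq
    have h1 : p.getLast hp' ∈ p := List.getLast_mem hp'
    have h2 : p.getLast hp' ∈ q := by
      have : q.getLast? = some (p.getLast hp') := by
        simp only at hpq
        rw [← hpq]; exact List.getLast?_eq_getLast hp'
      rw [List.getLast?_eq_getLast hq'] at this
      simp only [← Option.some_inj.1 this]
      simpa using List.getLast_mem hq'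
    exact hdisj p hp q hq hne' _ h1 h2
  set Q : Finset (Option V) := P.image (fun l => l.getLast?) with hQ
  set R : Finset (Option V) := (Wb ∪ D).toFinset.image some with hR
  have hQR : Q ⊆ R := by
    intro x hx
    simp only [hQ, Finset.mem_image] at hx
    obtain ⟨p, hp, rfl⟩ := hx
    have := ((hP p hp).2 (hne p hp)).2
    simp only [hR, Finset.mem_image, Set.mem_toFinset]
    exact ⟨p.getLast (hne p hp), this, (List.getLast?_eq_getLast (hne p hp)).symm⟩
  have hQcard : Q.card = D.ncard + Wb.ncard := by
    rw [hQ, Finset.card_image_of_injOn hinj, hcard]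
  have hRcard : R.card ≤ D.ncard + Wb.ncard := by
    rw [hR, Finset.card_image_of_injective _ (Option.some_injective V)]
    rw [← Set.ncard_eq_toFinset_card']
    calc (Wb ∪ D).ncard ≤ Wb.ncard + D.ncard := Set.ncard_union_le _ _
      _ = D.ncard + Wb.ncard := Nat.add_comm _ _
  have hQeqR : Q = R := Finset.eq_of_subset_of_card_le hQR (by omega)
  constructor
  · have h1 : (Wb ∪ D).ncard = D.ncard + Wb.ncard := by
      have := hQeqR ▸ hQcard
      rw [hR, Finset.card_image_of_injective _ (Option.some_injective V),
        ← Set.ncard_eq_toFinset_card'] at this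
      exact this
    have h2 := Set.ncard_union_add_ncard_inter Wb D (Set.toFinite _) (Set.toFinite _)
    have h3 : (Wb ∩ D).ncard = 0 := by omega
    rw [Set.ncard_eq_zero (Set.toFinite _)] at h3
    rw [Set.inter_comm]; exact h3
  · intro v hv
    have : some v ∈ R := by
      simp only [hR, Finset.mem_image, Set.mem_toFinset]; exact ⟨v, hv, rfl⟩
    rw [← hQeqR, hQ, Finset.mem_image] at this
    obtain ⟨p, hp, hp2⟩ := this
    exact ⟨p, hp, hp2⟩
end counting

lemma chain_to_nodup {V : Type*} (r : V → V → Prop) :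
    ∀ (n : ℕ) (l : List V), l.length ≤ n → l ≠ [] → l.Chain' r →
      ∃ m : List V, m ≠ [] ∧ m.Nodup ∧ m.Chain' r ∧
        m.head? = l.head? ∧ m.getLast? = l.getLast? ∧ ∀ v ∈ m, v ∈ l := by
  intro n
  induction n with
  | zero => intro l hl hne _; simp [List.length_eq_zero_iff] at hl; exact absurd hl hne
  | succ n ih =>
    rintro (_ | ⟨a, t⟩) hl hne hc
    · exact absurd rfl hne
    by_cases ha : a ∈ t
    · obtain ⟨u, s, rfl⟩ := List.append_of_mem ha
      have hsuf : (a :: s) <:+ (a :: (u ++ a :: s)) := by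
        exact (List.suffix_append u (a :: s)).trans (List.suffix_cons _ _)
      have hlen : (a :: s).length ≤ n := by
        simp at hl ⊢; omega
      obtain ⟨m, h1, h2, h3, h4, h5, h6⟩ := ih (a :: s) hlen (by simp) (hc.suffix hsuf)
      refine ⟨m, h1, h2, h3, ?_, ?_, fun v hv => hsuf.subset (h6 v hv)⟩
      · simpa using h4
      · rw [h5]
        have : a :: (u ++ a :: s) = (a :: u) ++ (a :: s) := by simp
        rw [this, List.getLast?_append_of_ne_nil _ (by simp)]
    · rcases t with _ | ⟨b, t'⟩
      · exact ⟨[a], by simp, by simp, List.isChain_singleton a, rfl, rfl, by simp⟩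
      obtain ⟨m, h1, h2, h3, h4, h5, h6⟩ := ih (b :: t') (by simp at hl ⊢; omega) (by simp)
          (hc.tail)
      refine ⟨a :: m, by simp, ?_, ?_, by simp, ?_, ?_⟩
      · exact List.nodup_cons.2 ⟨fun hm => ha (h6 a hm), h2⟩
      · rw [List.Chain', List.isChain_cons]
        refine ⟨fun y hy => ?_, h3⟩
        rw [h4] at hy
        simp at hy
        subst hy
        exact (List.isChain_cons_cons.1 hc).1
      · rw [getLast?_cons_ne h1, h5]
        exact (getLast?_cons_ne (by simp)).symm
      · intro v hv
        rcases List.mem_cons.1 hv with h | h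
        · simp [h]
        · exact List.mem_cons_of_mem a (h6 v h)

theorem stmt15 {V : Type*} [Fintype V] (r : V → V → Prop) (Xb Wb V2 D : Set V)
    (hb : ∃ P : Finset (List V), P.card = D.ncard + Wb.ncard ∧
      (∀ l ∈ P, IsPathFromTo r Xb (Wb ∪ D) l) ∧
      (∀ l₁ ∈ P, ∀ l₂ ∈ P, l₁ ≠ l₂ → ∀ v ∈ l₁, v ∉ l₂)) :
    Disconnects r Xb V2 D ↔
      (Disconnects r (Wb ∪ Xb) V2 D ∧ D ∩ Wb = ∅) := by
  obtain ⟨P, hcard, hP, hdisj⟩ := hb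
  obtain ⟨hDW, hsurj⟩ := counting hcard hP hdisj
  have hpe : ∀ p ∈ P, p ≠ [] := fun p hp => (hP p hp).1.1
  -- paths in P ending in Wb avoid D
  have hkey : ∀ p ∈ P, ∀ hp' : p ≠ [], p.getLast hp' ∈ Wb → ∀ d ∈ D, d ∉ p := by
    intro p hp hp' hw d hd
    obtain ⟨q, hq, hq2⟩ := hsurj d (Or.inr hd)
    have hq' : q ≠ [] := hpe q hq
    have hqd : q.getLast hq' = d := by
      rw [List.getLast?_eq_getLast hq'] at hq2
      exact Option.some_inj.1 hq2
    by_cases hpq : q = p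
    · subst hpq
      have : d ∈ D ∩ Wb := ⟨hd, hqd ▸ hw⟩
      rw [hDW] at this
      exact absurd this (Set.notMem_empty d)
    · exact hdisj q hq p hp hpq d (hqd ▸ List.getLast_mem hq')
  constructor
  · intro hX
    refine ⟨?_, hDW⟩
    intro l hl
    obtain ⟨⟨hlne, hlnd, hlch⟩, hends⟩ := hl
    obtain ⟨hhead, hlast⟩ := hends hlne
    rcases hhead with hW | hXh
    · -- head ∈ Wb: prepend a path from P
      by_contra hno
      push_neg at hno
      obtain ⟨a, t, rfl⟩ : ∃ a t, l = a :: t := by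
        cases l with
        | nil => exact absurd rfl hlne
        | cons a t => exact ⟨a, t, rfl⟩
      have hWa : a ∈ Wb := by simpa using hW
      obtain ⟨p, hp, hp2⟩ := hsurj a (Or.inl hWa)
      have hp' : p ≠ [] := hpe p hp
      have hpw : p.getLast hp' = a := by
        rw [List.getLast?_eq_getLast hp'] at hp2
        exact Option.some_inj.1 hp2
      set wk := p ++ t with hwk
      have hwkne : wk ≠ [] := by simp [hwk, hp']
      have hwkch : wk.Chain' r := by
        rw [hwk, List.Chain', List.isChain_append]
        refine ⟨(hP p hp).1.2.2, hlch.tail, ?_⟩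
        intro x hx y hy
        rw [List.getLast?_eq_getLast hp', hpw] at hx
        have hxa : a = x := by simpa using hx
        subst hxa
        rw [List.Chain', List.isChain_cons] at hlch
        exact hlch.1 y hy
      have hwklast : wk.getLast? = some ((a :: t).getLast hlne) := by
        rcases t with _ | ⟨b, t'⟩
        · rw [hwk, List.append_nil, List.getLast?_eq_getLast hp', hpw]
          simp
        · rw [hwk, List.getLast?_append_of_ne_nil _ (by simp),
            ← List.getLast?_eq_getLast hlne]
          exact (getLast?_cons_ne (a := a) (by simp)).symm
      have hwkhead : wk.head? = some (p.head hp') := by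
        rw [hwk]
        cases p with
        | nil => exact absurd rfl hp'
        | cons c q => simp
      obtain ⟨m, hm1, hm2, hm3, hm4, hm5, hm6⟩ :=
        chain_to_nodup r wk.length wk le_rfl hwkne hwkch
      have hmhead : m.head hm1 = p.head hp' := by
        have h := hm4.trans hwkhead
        rw [List.head?_eq_head hm1] at h
        exact Option.some_inj.1 h
      have hmlast : m.getLast hm1 = (a :: t).getLast hlne := by
        have h := hm5.trans hwklast
        rw [List.getLast?_eq_getLast hm1] at h
        exact Option.some_inj.1 h
      have hmpath : IsPathFromTo r Xb V2 m := by
        refine ⟨⟨hm1, hm2, hm3⟩, fun h => ⟨?_, ?_⟩⟩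
        · rw [hmhead]; exact ((hP p hp).2 hp').1
        · rw [hmlast]; exact hlast
      obtain ⟨v, hvD, hvm⟩ := hX m hmpath
      have hvwk := hm6 v hvm
      rw [hwk, List.mem_append] at hvwk
      rcases hvwk with h | h
      · exact hkey p hp hp' (hpw ▸ hWa) v hvD h
      · exact hno v hvD (List.mem_cons_of_mem a h)
    · exact hX l ⟨⟨hlne, hlnd, hlch⟩, fun _ => ⟨hXh, hlast⟩⟩
  · rintro ⟨hWX, -⟩ l hl
    exact hWX l ⟨hl.1, fun h => ⟨Or.inr (hl.2 h).1, (hl.2 h).2⟩⟩
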